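/- Let d ≥ 3, Ω = {1,…,d}, and let F ≤ F' ≤ Sym(Ω) be permutation groups such that every element of F' maps each F-orbit onto itself and F' acts 2-transitively on Ω (this forces F to be transitive, hence nontrivial). Let T be a legally colored d-regular tree. Then there exists a geodesic line L in T such that the setwise stabilizer H of L in G(F,F') contains an element t with t·L(i) = L(i+2) for all i ∈ ℤ and an element r with r·L(i) = L(−i) for all i ∈ ℤ; consequently H acts transitively on the geometric edges of L. -/

import Mathlib

/-- The automorphism group of a simple graph, as a subgroup of the permutation
group of its vertex set. -/
def SimpleGraph.autSubgroup {V : Type*} (T : SimpleGraph V) : Subgroup (Equiv.Perm V) where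
  carrier := {e | ∀ u v : V, T.Adj (e u) (e v) ↔ T.Adj u v}
  one_mem' := fun _ _ => Iff.rfl
  mul_mem' := by
    intro a b ha hb u v
    simp only [Equiv.Perm.mul_apply]
    rw [ha, hb]
  inv_mem' := by
    intro a ha u v
    simpa using (ha (a⁻¹ u) (a⁻¹ v)).symm

/-- A legal coloring of a `d`-regular tree: every vertex's edges are colored
bijectively with the colors `Fin d`. The color of the edge `{u, v}` is `color u v`. -/
structure LegalColoring {V : Type*} (T : SimpleGraph V) (d : ℕ) where
  color : V → V → Fin d
  symm : ∀ ⦃u v : V⦄, T.Adj u v → color u v = color v u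
  bij : ∀ (v : V) (i : Fin d), ∃! w : V, T.Adj v w ∧ color v w = i

/-- The local permutation `σ(g, v)` of an automorphism `g` at a vertex `v`
belongs to the permutation group `F`. -/
def LocalIn {V : Type*} {d : ℕ} (T : SimpleGraph V) (C : LegalColoring T d)
    (F : Subgroup (Equiv.Perm (Fin d))) (g : Equiv.Perm V) (v : V) : Prop :=
  ∃ π ∈ F, ∀ ⦃w : V⦄, T.Adj v w → C.color (g v) (g w) = π (C.color v w)

/-- The universal Burger–Mozes group `U(F)` (as a set of permutations of the vertices):
automorphisms whose local permutation lies in `F` at every vertex. -/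
def USet {V : Type*} {d : ℕ} (T : SimpleGraph V) (C : LegalColoring T d)
    (F : Subgroup (Equiv.Perm (Fin d))) : Set (Equiv.Perm V) :=
  {g | g ∈ T.autSubgroup ∧ ∀ v : V, LocalIn T C F g v}

/-- The group `G(F)`: automorphisms whose local permutation lies in `F` at all but
finitely many vertices. -/
def GSet {V : Type*} {d : ℕ} (T : SimpleGraph V) (C : LegalColoring T d)
    (F : Subgroup (Equiv.Perm (Fin d))) : Set (Equiv.Perm V) :=
  {g | g ∈ T.autSubgroup ∧ {v : V | ¬ LocalIn T C F g v}.Finite}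

/-- Le Boudec's group `G(F, F')` with almost prescribed local action (as a set of
permutations of the vertices): `G(F) ∩ U(F')`. -/
def GFFSet {V : Type*} {d : ℕ} (T : SimpleGraph V) (C : LegalColoring T d)
    (F F' : Subgroup (Equiv.Perm (Fin d))) : Set (Equiv.Perm V) :=
  GSet T C F ∩ USet T C F'

namespace BMProof
open SimpleGraph List

variable {V : Type*} {d : ℕ} {T : SimpleGraph V} (C : LegalColoring T d)

noncomputable def nb (v : V) (i : Fin d) : V := (C.bij v i).choose

lemma adj_nb (v : V) (i : Fin d) : T.Adj v (nb C v i) := (C.bij v i).choose_spec.1.1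
lemma color_nb (v : V) (i : Fin d) : C.color v (nb C v i) = i := (C.bij v i).choose_spec.1.2
lemma eq_nb {v w : V} {i : Fin d} (h : T.Adj v w) (hc : C.color v w = i) : w = nb C v i :=
  (C.bij v i).choose_spec.2 w ⟨h, hc⟩
lemma nb_color {v w : V} (h : T.Adj v w) : nb C v (C.color v w) = w := (eq_nb C h rfl).symm
lemma nb_nb (v : V) (i : Fin d) : nb C (nb C v i) i = v := by
  have h : C.color (nb C v i) v = i := by rw [← C.symm (adj_nb C v i), color_nb]
  have := nb_color C (adj_nb C v i).symm
  rwa [h] at this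
lemma nb_inj (v : V) {i j : Fin d} (h : nb C v i = nb C v j) : i = j := by
  rw [← color_nb C v i, h, color_nb]

noncomputable def walkTo : V → List (Fin d) → V
  | v, [] => v
  | v, i :: l => walkTo (nb C v i) l

@[simp] lemma walkTo_nil (v : V) : walkTo C v [] = v := rfl
@[simp] lemma walkTo_cons (v : V) (i : Fin d) (l : List (Fin d)) :
    walkTo C v (i :: l) = walkTo C (nb C v i) l := rfl

lemma walkTo_append (v : V) (l1 l2 : List (Fin d)) :
    walkTo C v (l1 ++ l2) = walkTo C (walkTo C v l1) l2 := by
  induction l1 generalizing v with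
  | nil => rfl
  | cons i l ih => simp [ih]

noncomputable def listWalk : (v : V) → (l : List (Fin d)) → T.Walk v (walkTo C v l)
  | _, [] => .nil
  | v, i :: l => .cons (adj_nb C v i) (listWalk (nb C v i) l)

def walkColors : {u v : V} → T.Walk u v → List (Fin d)
  | _, _, .nil => []
  | u, _, .cons (v := x) _ p => C.color u x :: walkColors p

lemma walkTo_walkColors {u v : V} (p : T.Walk u v) : walkTo C u (walkColors C p) = v := by
  induction p with
  | nil => rfl
  | cons h p ih => rw [walkColors, walkTo_cons, nb_color C h]; exact ih

lemma walkColors_listWalk (v : V) (l : List (Fin d)) : walkColors C (listWalk C v l) = l := by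
  induction l generalizing v with
  | nil => rfl
  | cons i l ih => rw [listWalk]; simp only [walkColors]; rw [color_nb]; exact congrArg _ (ih _)

lemma walkColors_copy {u v u' v' : V} (p : T.Walk u v) (h1 : u = u') (h2 : v = v') :
    walkColors C (p.copy h1 h2) = walkColors C p := by
  subst h1; subst h2; rw [SimpleGraph.Walk.copy_rfl_rfl]

lemma walkColors_chain {u v : V} (p : T.Walk u v) (hp : p.IsPath) :
    List.Chain' (· ≠ ·) (walkColors C p) := by
  induction p with
  | nil => simp [walkColors, List.Chain']
  | @cons u x v h p ih =>
    cases p with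
    | nil => simp [walkColors, List.Chain']
    | @cons x y v h' p' =>
      rw [walkColors, walkColors, List.Chain', List.isChain_cons_cons]
      refine ⟨?_, ?_⟩
      · intro hc
        have hxu : C.color x u = C.color x y := by rw [← C.symm h, hc]
        have : u = y := by
          have h1 := eq_nb C h.symm hxu
          have h2 := (eq_nb C h' rfl)
          rw [h1, ← h2]
        have hu : u ∉ (SimpleGraph.Walk.cons h' p').support :=
          ((SimpleGraph.Walk.cons_isPath_iff _ _).mp hp).2
        exact hu (by rw [this]; simp)
      · exact ih hp.of_cons

section Tree

lemma reduced_isPath (hT : T.IsTree) : ∀ (l : List (Fin d)) (v : V), List.Chain' (· ≠ ·) l →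
    (listWalk C v l).IsPath := by
  classical
  intro l
  induction l with
  | nil => intro v _; exact SimpleGraph.Walk.IsPath.nil
  | cons i l ih =>
    intro v hch
    have hq : (listWalk C (nb C v i) l).IsPath := ih _ hch.tail
    show (SimpleGraph.Walk.cons (adj_nb C v i) (listWalk C (nb C v i) l)).IsPath
    rw [SimpleGraph.Walk.cons_isPath_iff]
    refine ⟨hq, fun hv => ?_⟩
    have hsing : (Path.singleton (adj_nb C v i).symm : T.Path (nb C v i) v) =
        ⟨(listWalk C (nb C v i) l).takeUntil v hv, hq.takeUntil hv⟩ :=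
      hT.IsAcyclic.path_unique _ _
    have htake : ((listWalk C (nb C v i) l).takeUntil v hv) =
        SimpleGraph.Walk.cons (adj_nb C v i).symm SimpleGraph.Walk.nil := by
      have := congrArg Subtype.val hsing
      exact this.symm
    cases l with
    | nil =>
      simp only [listWalk, SimpleGraph.Walk.support_nil, List.mem_singleton] at hv
      exact (adj_nb C v i).ne (List.mem_singleton.mp hv)
    | cons j l' =>
      have hspec := (listWalk C (nb C v i) (j :: l')).take_spec hv
      rw [htake] at hspec
      rw [SimpleGraph.Walk.cons_append, SimpleGraph.Walk.nil_append] at hspec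
      have h1 := congrArg (fun w => SimpleGraph.Walk.getVert w 1) hspec
      rw [SimpleGraph.Walk.getVert_cons_succ, SimpleGraph.Walk.getVert_zero] at h1
      replace h1 : v = nb C (nb C v i) j := h1.trans (by simp [listWalk])
      -- h1 : v = nb C (nb C v i) j
      have h2 : nb C (nb C v i) i = v := nb_nb C v i
      have : i = j := nb_inj C (nb C v i) (h2.trans h1)
      exact (List.isChain_cons_cons.mp hch).1 this

lemma exists_addr (hT : T.IsTree) (r v : V) : ∃ l : List (Fin d), List.Chain' (· ≠ ·) l ∧ walkTo C r l = v := by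
  classical
  obtain ⟨p⟩ := hT.isConnected.preconnected r v
  exact ⟨walkColors C p.bypass, walkColors_chain C _ p.bypass_isPath, walkTo_walkColors C _⟩

lemma addr_unique (hT : T.IsTree) {r : V} {l1 l2 : List (Fin d)} (h1 : List.Chain' (· ≠ ·) l1)
    (h2 : List.Chain' (· ≠ ·) l2) (he : walkTo C r l1 = walkTo C r l2) : l1 = l2 := by
  have hp1 : ((listWalk C r l1).copy rfl he).IsPath := by
    rw [SimpleGraph.Walk.isPath_copy]; exact reduced_isPath C hT l1 r h1
  have hp2 : (listWalk C r l2).IsPath := reduced_isPath C hT l2 r h2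
  have : (⟨(listWalk C r l1).copy rfl he, hp1⟩ : T.Path r (walkTo C r l2)) = ⟨listWalk C r l2, hp2⟩ :=
    hT.IsAcyclic.path_unique _ _
  have hw := congrArg Subtype.val this
  have := congrArg (walkColors C) hw
  rwa [walkColors_copy, walkColors_listWalk, walkColors_listWalk] at this

noncomputable def addr (hT : T.IsTree) (r v : V) : List (Fin d) := (exists_addr C hT r v).choose

lemma addr_chain (hT : T.IsTree) (r v : V) : List.Chain' (· ≠ ·) (addr C hT r v) :=
  (exists_addr C hT r v).choose_spec.1

lemma walkTo_addr (hT : T.IsTree) (r v : V) : walkTo C r (addr C hT r v) = v :=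
  (exists_addr C hT r v).choose_spec.2

lemma addr_walkTo (hT : T.IsTree) (r : V) {l : List (Fin d)} (h : List.Chain' (· ≠ ·) l) :
    addr C hT r (walkTo C r l) = l :=
  addr_unique C hT (addr_chain C hT r _) h (walkTo_addr C hT r _)

lemma addr_injective (hT : T.IsTree) (r : V) : Function.Injective (addr C hT r) := by
  intro u v h
  rw [← walkTo_addr C hT r u, ← walkTo_addr C hT r v, h]

end Tree

-- ## Portraits and the automorphisms they induce

def tr : (List (Fin d) → Equiv.Perm (Fin d)) → List (Fin d) → List (Fin d)
  | _, [] => []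
  | P, x :: w => P [] x :: tr (fun u => P (x :: u)) w

def itr : (List (Fin d) → Equiv.Perm (Fin d)) → List (Fin d) → List (Fin d)
  | _, [] => []
  | P, y :: w => (P [])⁻¹ y :: itr (fun u => P ((P [])⁻¹ y :: u)) w

def Compat (P : List (Fin d) → Equiv.Perm (Fin d)) : Prop :=
  ∀ w x, P (w ++ [x]) x = P w x

lemma tr_concat (P : List (Fin d) → Equiv.Perm (Fin d)) (w : List (Fin d)) (x : Fin d) :
    tr P (w ++ [x]) = tr P w ++ [P w x] := by
  induction w generalizing P with
  | nil => rfl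
  | cons y w ih =>
    simp only [List.cons_append, tr]
    rw [ih]

lemma itr_concat (P : List (Fin d) → Equiv.Perm (Fin d)) (w : List (Fin d)) (y : Fin d) :
    itr P (w ++ [y]) = itr P w ++ [(P (itr P w))⁻¹ y] := by
  induction w generalizing P with
  | nil => rfl
  | cons z w ih =>
    simp only [List.cons_append, itr]
    rw [ih]

lemma itr_tr (P : List (Fin d) → Equiv.Perm (Fin d)) (w : List (Fin d)) :
    itr P (tr P w) = w := by
  induction w generalizing P with
  | nil => rfl
  | cons x w ih =>
    simp only [tr, itr, Equiv.Perm.coe_inv, Equiv.symm_apply_apply]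
    exact congrArg _ (ih _)

lemma tr_itr (P : List (Fin d) → Equiv.Perm (Fin d)) (w : List (Fin d)) :
    tr P (itr P w) = w := by
  induction w generalizing P with
  | nil => rfl
  | cons y w ih =>
    simp only [itr, tr, Equiv.Perm.coe_inv, Equiv.apply_symm_apply]
    exact congrArg _ (ih _)

def QOf (P : List (Fin d) → Equiv.Perm (Fin d)) : List (Fin d) → Equiv.Perm (Fin d) :=
  fun w => (P (itr P w))⁻¹

lemma QOf_compat {P : List (Fin d) → Equiv.Perm (Fin d)} (hP : Compat P) : Compat (QOf P) := by
  intro w y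
  unfold QOf
  rw [itr_concat]
  set z := (P (itr P w))⁻¹ y with hz
  have : P (itr P w ++ [z]) z = y := by rw [hP (itr P w) z, hz, Equiv.Perm.coe_inv, Equiv.apply_symm_apply]
  rw [← this]
  simp

lemma tr_QOf (P : List (Fin d) → Equiv.Perm (Fin d)) (w : List (Fin d)) :
    tr (QOf P) w = itr P w := by
  induction w generalizing P with
  | nil => rfl
  | cons y w ih =>
    simp only [tr, itr]
    have h1 : QOf P [] = (P [])⁻¹ := rfl
    rw [h1]
    refine congrArg _ ?_
    have h2 : (fun u => QOf P (y :: u)) = QOf (fun u => P ((P [])⁻¹ y :: u)) := by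
      funext u
      unfold QOf
      simp only [itr]
    rw [h2, ih]

lemma tr_chain {P : List (Fin d) → Equiv.Perm (Fin d)} (hP : Compat P) :
    ∀ {w : List (Fin d)}, List.Chain' (· ≠ ·) w → List.Chain' (· ≠ ·) (tr P w) := by
  intro w
  induction w generalizing P with
  | nil => intro _; simp [tr, List.Chain']
  | cons x w ih =>
    intro hch
    cases w with
    | nil => simp [tr, List.Chain']
    | cons y w' =>
      rw [tr, tr, List.Chain', List.isChain_cons_cons]
      constructor
      · have hxx : P [x] x = P [] x := by
          have := hP [] x
          simpa using this
        intro hc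
        have : P [x] y = P [x] x := by rw [hxx, ← hc]
        exact (List.isChain_cons_cons.mp hch).1 ((P [x]).injective this).symm
      · have hcomp : Compat (fun u => P (x :: u)) := by
          intro w'' z
          exact hP (x :: w'') z
        have := ih (P := fun u => P (x :: u)) hcomp (List.isChain_cons_cons.mp hch).2
        rw [tr] at this
        exact this

-- ## The automorphism induced by a compatible portrait

variable (hT : T.IsTree)

noncomputable def pmap (r u : V) (P : List (Fin d) → Equiv.Perm (Fin d)) : V → V :=
  fun v => walkTo C u (tr P (addr C hT r v))

lemma pmap_nb {P : List (Fin d) → Equiv.Perm (Fin d)} (hP : Compat P) (r u v : V) (j : Fin d) :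
    pmap C hT r u P (nb C v j) = nb C (pmap C hT r u P v) (P (addr C hT r v) j) := by
  classical
  by_cases hlast : (addr C hT r v).getLast? = some j
  · -- going back towards the root
    have hne : addr C hT r v ≠ [] := by intro h; rw [h] at hlast; simp at hlast
    obtain ⟨w', hsplit⟩ : ∃ w', addr C hT r v = w' ++ [j] := by
      refine ⟨(addr C hT r v).dropLast, ?_⟩
      have h2 : (addr C hT r v).getLast hne = j := by
        rw [List.getLast?_eq_getLast hne] at hlast
        exact (Option.some_inj.mp hlast)
      rw [← h2]
      exact (List.dropLast_append_getLast hne).symm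
    have hwch : List.Chain' (· ≠ ·) (addr C hT r v) := addr_chain C hT r v
    have hwv : walkTo C r (addr C hT r v) = v := walkTo_addr C hT r v
    have hch' : List.Chain' (· ≠ ·) w' := by
      rw [hsplit] at hwch; exact (List.isChain_append.mp hwch).1
    have hv' : v = nb C (walkTo C r w') j := by
      rw [← hwv, hsplit, walkTo_append]; rfl
    have hnbv : nb C v j = walkTo C r w' := by rw [hv', nb_nb]
    have haddr' : addr C hT r (nb C v j) = w' := by rw [hnbv, addr_walkTo C hT r hch']
    rw [pmap, pmap, haddr', hsplit, tr_concat, walkTo_append]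
    rw [hP w' j]
    simp only [walkTo_cons, walkTo_nil]
    rw [nb_nb]
  · -- going away from the root
    have hwch : List.Chain' (· ≠ ·) (addr C hT r v) := addr_chain C hT r v
    have hwv : walkTo C r (addr C hT r v) = v := walkTo_addr C hT r v
    have hch2 : List.Chain' (· ≠ ·) (addr C hT r v ++ [j]) := by
      rw [List.Chain', List.isChain_append]
      refine ⟨hwch, by simp, ?_⟩
      intro x hx y hy
      simp only [List.head?_cons, Option.mem_def, Option.some_inj] at hy
      subst hy
      intro hxy
      exact hlast (by rw [← hxy]; exact hx)
    have hnbv : nb C v j = walkTo C r (addr C hT r v ++ [j]) := by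
      rw [walkTo_append, hwv]; rfl
    have haddr' : addr C hT r (nb C v j) = addr C hT r v ++ [j] := by
      rw [hnbv, addr_walkTo C hT r hch2]
    rw [pmap, pmap, haddr', tr_concat, walkTo_append]
    rfl

lemma pmap_adj {P : List (Fin d) → Equiv.Perm (Fin d)} (hP : Compat P) (r u : V) {v w : V}
    (h : T.Adj v w) : T.Adj (pmap C hT r u P v) (pmap C hT r u P w) := by
  have : w = nb C v (C.color v w) := (nb_color C h).symm
  rw [this, pmap_nb C hT hP]
  exact adj_nb C _ _

lemma pmap_leftInv {P : List (Fin d) → Equiv.Perm (Fin d)} (hP : Compat P) (r u : V) (v : V) :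
    pmap C hT u r (QOf P) (pmap C hT r u P v) = v := by
  rw [pmap, pmap, addr_walkTo C hT u (tr_chain hP (addr_chain C hT r v)), tr_QOf, itr_tr,
    walkTo_addr]

lemma pmap_rightInv {P : List (Fin d) → Equiv.Perm (Fin d)} (hP : Compat P) (r u : V) (v : V) :
    pmap C hT r u P (pmap C hT u r (QOf P) v) = v := by
  rw [pmap, pmap, addr_walkTo C hT r (tr_chain (QOf_compat hP) (addr_chain C hT u v)), tr_QOf,
    tr_itr, walkTo_addr]

noncomputable def pperm (r u : V) {P : List (Fin d) → Equiv.Perm (Fin d)} (hP : Compat P) :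
    Equiv.Perm V where
  toFun := pmap C hT r u P
  invFun := pmap C hT u r (QOf P)
  left_inv := pmap_leftInv C hT hP r u
  right_inv := pmap_rightInv C hT hP r u

lemma pperm_apply (r u : V) {P : List (Fin d) → Equiv.Perm (Fin d)} (hP : Compat P) (v : V) :
    pperm C hT r u hP v = walkTo C u (tr P (addr C hT r v)) := rfl

lemma pperm_mem_aut (r u : V) {P : List (Fin d) → Equiv.Perm (Fin d)} (hP : Compat P) :
    pperm C hT r u hP ∈ T.autSubgroup := by
  intro a b
  constructor
  · intro h
    have := pmap_adj C hT (QOf_compat hP) u r h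
    rwa [show pmap C hT u r (QOf P) (pperm C hT r u hP a) = a from pmap_leftInv C hT hP r u a,
      show pmap C hT u r (QOf P) (pperm C hT r u hP b) = b from pmap_leftInv C hT hP r u b] at this
  · exact pmap_adj C hT hP r u

lemma pperm_color (r u : V) {P : List (Fin d) → Equiv.Perm (Fin d)} (hP : Compat P) {v w : V}
    (h : T.Adj v w) :
    C.color (pperm C hT r u hP v) (pperm C hT r u hP w) = P (addr C hT r v) (C.color v w) := by
  have hw : w = nb C v (C.color v w) := (nb_color C h).symm
  conv_lhs => rw [hw]
  show C.color _ (pmap C hT r u P (nb C v (C.color v w))) = _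
  rw [pmap_nb C hT hP]
  exact color_nb C _ _

lemma pperm_localIn (r u : V) {P : List (Fin d) → Equiv.Perm (Fin d)} (hP : Compat P)
    (F'' : Subgroup (Equiv.Perm (Fin d))) (v : V) (h : P (addr C hT r v) ∈ F'') :
    LocalIn T C F'' (pperm C hT r u hP) v :=
  ⟨P (addr C hT r v), h, fun w hw => pperm_color C hT r u hP hw⟩

-- ## Closure properties of GFFSet

lemma localIn_mul {F'' : Subgroup (Equiv.Perm (Fin d))} {g h : Equiv.Perm V}
    (hha : h ∈ T.autSubgroup) {v : V} (hh : LocalIn T C F'' h v)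
    (hg : LocalIn T C F'' g (h v)) : LocalIn T C F'' (g * h) v := by
  obtain ⟨πg, hπg, hgc⟩ := hg
  obtain ⟨πh, hπh, hhc⟩ := hh
  refine ⟨πg * πh, mul_mem hπg hπh, fun w hw => ?_⟩
  have hadj : T.Adj (h v) (h w) := (hha v w).mpr hw
  simp only [Equiv.Perm.mul_apply]
  rw [hgc hadj, hhc hw]

lemma localIn_inv {F'' : Subgroup (Equiv.Perm (Fin d))} {g : Equiv.Perm V}
    (hga : g ∈ T.autSubgroup) {v : V} (hg : LocalIn T C F'' g (g⁻¹ v)) :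
    LocalIn T C F'' g⁻¹ v := by
  obtain ⟨π, hπ, hc⟩ := hg
  refine ⟨π⁻¹, inv_mem hπ, fun w hw => ?_⟩
  have hadj : T.Adj (g⁻¹ v) (g⁻¹ w) := (T.autSubgroup.inv_mem hga v w).mpr hw
  have := hc hadj
  simp only [Equiv.Perm.coe_inv, Equiv.apply_symm_apply] at this
  rw [this]
  simp

lemma GFF_mul {F F' : Subgroup (Equiv.Perm (Fin d))} {g h : Equiv.Perm V}
    (hg : g ∈ GFFSet T C F F') (hh : h ∈ GFFSet T C F F') : g * h ∈ GFFSet T C F F' := by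
  obtain ⟨⟨hga, hgf⟩, hgu, hgl⟩ := hg
  obtain ⟨⟨hha, hhf⟩, hhu, hhl⟩ := hh
  refine ⟨⟨T.autSubgroup.mul_mem hga hha, ?_⟩, T.autSubgroup.mul_mem hga hha, fun v => ?_⟩
  · refine Set.Finite.subset (hhf.union (hgf.preimage (h.injective.injOn))) ?_
    intro v hv
    simp only [Set.mem_setOf_eq, Set.mem_union, Set.mem_preimage] at hv ⊢
    by_contra hcon
    push_neg at hcon
    exact hv (localIn_mul C hha hcon.1 hcon.2)
  · exact localIn_mul C hha (hhl v) (hgl (h v))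

lemma GFF_inv {F F' : Subgroup (Equiv.Perm (Fin d))} {g : Equiv.Perm V}
    (hg : g ∈ GFFSet T C F F') : g⁻¹ ∈ GFFSet T C F F' := by
  obtain ⟨⟨hga, hgf⟩, hgu, hgl⟩ := hg
  refine ⟨⟨T.autSubgroup.inv_mem hga, ?_⟩, T.autSubgroup.inv_mem hga, fun v => ?_⟩
  · refine Set.Finite.subset (hgf.image ⇑g) ?_
    intro v hv
    simp only [Set.mem_setOf_eq, Set.mem_image] at hv ⊢
    refine ⟨g⁻¹ v, fun hcon => hv (localIn_inv C hga hcon), by simp⟩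
  · exact localIn_inv C hga (hgl (g⁻¹ v))

-- ## Building portraits from specifications

def mkRev (f : Fin d → Fin d → Equiv.Perm (Fin d)) (base : Equiv.Perm (Fin d))
    (sp : List (Fin d) → Option (Equiv.Perm (Fin d))) : List (Fin d) → Equiv.Perm (Fin d)
  | [] => base
  | x :: rw => match sp (x :: rw).reverse with
    | some q => q
    | none => f x (mkRev f base sp rw x)

def mkP (f : Fin d → Fin d → Equiv.Perm (Fin d)) (base : Equiv.Perm (Fin d))
    (sp : List (Fin d) → Option (Equiv.Perm (Fin d))) : List (Fin d) → Equiv.Perm (Fin d) :=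
  fun w => mkRev f base sp w.reverse

lemma mkP_nil (f : Fin d → Fin d → Equiv.Perm (Fin d)) (base : Equiv.Perm (Fin d))
    (sp : List (Fin d) → Option (Equiv.Perm (Fin d))) : mkP f base sp [] = base := rfl

lemma mkP_eq_of_some {f : Fin d → Fin d → Equiv.Perm (Fin d)} {base : Equiv.Perm (Fin d)}
    {sp : List (Fin d) → Option (Equiv.Perm (Fin d))} {w : List (Fin d)}
    {q : Equiv.Perm (Fin d)} (hne : w ≠ []) (h : sp w = some q) : mkP f base sp w = q := by
  unfold mkP
  cases hr : w.reverse with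
  | nil => exact absurd (by simpa using congrArg List.reverse hr) hne
  | cons x rw =>
    have hwr : (x :: rw).reverse = w := by
      rw [← hr]; simp
    rw [mkRev, hwr, h]

lemma mkP_concat_none {f : Fin d → Fin d → Equiv.Perm (Fin d)} {base : Equiv.Perm (Fin d)}
    {sp : List (Fin d) → Option (Equiv.Perm (Fin d))} {w : List (Fin d)} {x : Fin d}
    (h : sp (w ++ [x]) = none) : mkP f base sp (w ++ [x]) = f x (mkP f base sp w x) := by
  unfold mkP
  rw [List.reverse_concat, mkRev]
  have hwr : (x :: w.reverse).reverse = w ++ [x] := by simp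
  rw [hwr, h]

lemma mkP_compat {f : Fin d → Fin d → Equiv.Perm (Fin d)} {base : Equiv.Perm (Fin d)}
    {sp : List (Fin d) → Option (Equiv.Perm (Fin d))}
    (hf : ∀ j k, f j k j = k)
    (hsp : ∀ w x q, sp (w ++ [x]) = some q → q x = mkP f base sp w x) :
    Compat (mkP f base sp) := by
  intro w x
  cases h : sp (w ++ [x]) with
  | some q => rw [mkP_eq_of_some (by simp) h]; exact hsp w x q h
  | none => rw [mkP_concat_none h]; exact hf x _

lemma mkP_mem {f : Fin d → Fin d → Equiv.Perm (Fin d)} {base : Equiv.Perm (Fin d)}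
    {sp : List (Fin d) → Option (Equiv.Perm (Fin d))} {F'' : Subgroup (Equiv.Perm (Fin d))}
    (hbase : base ∈ F'') (hsp : ∀ w q, sp w = some q → q ∈ F'')
    (hff : ∀ j k, f j k ∈ F'') : ∀ w, mkP f base sp w ∈ F'' := by
  intro w
  cases hr : w.reverse with
  | nil =>
    have : w = [] := by simpa using congrArg List.reverse hr
    rw [this, mkP_nil]; exact hbase
  | cons x rw =>
    unfold mkP
    rw [hr, mkRev]
    cases h : sp (x :: rw).reverse with
    | some q => exact hsp _ q h
    | none => exact hff x _

lemma mkP_memF {f : Fin d → Fin d → Equiv.Perm (Fin d)} {base : Equiv.Perm (Fin d)}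
    {sp : List (Fin d) → Option (Equiv.Perm (Fin d))} {F'' : Subgroup (Equiv.Perm (Fin d))}
    {w : List (Fin d)} (hne : w ≠ []) (hsp : ∀ q, sp w = some q → q ∈ F'')
    (hff : ∀ j k, f j k ∈ F'') : mkP f base sp w ∈ F'' := by
  cases hr : w.reverse with
  | nil => exact absurd (by simpa using congrArg List.reverse hr) hne
  | cons x rw =>
    unfold mkP
    rw [hr, mkRev]
    have hwr : (x :: rw).reverse = w := by rw [← hr]; simp
    rw [hwr]
    cases h : sp w with
    | some q => exact hsp q h
    | none => exact hff x _

-- ## Alternating colour words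

def cnat (a b : Fin d) (n : ℕ) : Fin d := if Even n then a else b

def posw (a b : Fin d) (n : ℕ) : List (Fin d) := (List.range n).map (cnat a b)

@[simp] lemma posw_zero (a b : Fin d) : posw a b 0 = [] := rfl

lemma posw_succ (a b : Fin d) (n : ℕ) : posw a b (n + 1) = posw a b n ++ [cnat a b n] := by
  simp [posw, List.range_succ]

@[simp] lemma posw_length (a b : Fin d) (n : ℕ) : (posw a b n).length = n := by
  simp [posw]

lemma cnat_period (a b : Fin d) (n : ℕ) : cnat a b (n + 2) = cnat a b n := by
  simp [cnat, Nat.even_add]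

lemma cnat_succ_ne (a b : Fin d) (hab : a ≠ b) (n : ℕ) : cnat a b n ≠ cnat a b (n + 1) := by
  rcases Nat.even_or_odd n with h | h
  · rw [cnat, cnat, if_pos h, if_neg (by simp [Nat.even_add_one, h])]
    exact hab
  · rw [cnat, cnat, if_neg (by simp [Nat.not_even_iff_odd.mpr h]),
      if_pos (by simp [Nat.even_add_one, Nat.not_even_iff_odd.mpr h])]
    exact hab.symm

lemma posw_chain (a b : Fin d) (hab : a ≠ b) (n : ℕ) : List.Chain' (· ≠ ·) (posw a b n) := by
  rw [posw, List.Chain', List.isChain_map]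
  cases n with
  | zero => simp
  | succ m =>
    rw [List.isChain_range_succ]
    intro k _
    exact cnat_succ_ne a b hab k

lemma posw_head (a b : Fin d) {n : ℕ} (hn : 1 ≤ n) : (posw a b n).head? = some a := by
  obtain ⟨m, rfl⟩ : ∃ m, n = m + 1 := ⟨n - 1, by omega⟩
  rw [posw, List.range_succ_eq_map]
  simp [cnat]

lemma posw_ne_posw (a b a' b' : Fin d) (haa : a ≠ a') {n m : ℕ} (hn : 1 ≤ n) (hm : 1 ≤ m) :
    posw a b n ≠ posw a' b' m := by
  intro h
  have := congrArg List.head? h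
  rw [posw_head a b hn, posw_head a' b' hm] at this
  exact haa (Option.some_inj.mp this)

lemma posw_add_two (a b : Fin d) (n : ℕ) : posw a b (n + 2) = posw a b 2 ++ posw a b n := by
  have : n + 2 = 2 + n := by omega
  rw [this, posw, List.range_add, List.map_append]
  congr 1
  rw [List.map_map]
  apply List.map_congr_left
  intro k _
  show cnat a b (2 + k) = cnat a b k
  rw [show 2 + k = k + 2 by omega, cnat_period]

lemma posw_two (a b : Fin d) : posw a b 2 = [a, b] := by
  rw [show (2:ℕ) = 1 + 1 from rfl, posw_succ, posw_succ]
  simp [cnat]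

lemma posw_one (a b : Fin d) : posw a b 1 = [a] := by
  rw [posw_succ]
  simp [cnat]

lemma posw_ne_nil (a b : Fin d) {n : ℕ} (hn : 1 ≤ n) : posw a b n ≠ [] := by
  intro h
  have := congrArg List.length h
  simp at this
  omega

lemma concat_eq_posw {a b : Fin d} {w : List (Fin d)} {x : Fin d} {n : ℕ}
    (h : w ++ [x] = posw a b n) :
    w = posw a b w.length ∧ x = cnat a b w.length ∧ n = w.length + 1 := by
  have hlen := congrArg List.length h
  simp only [List.length_append, List.length_singleton, posw_length] at hlen
  obtain rfl : n = w.length + 1 := by omega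
  rw [posw_succ] at h
  obtain ⟨hw, hx⟩ := List.append_inj' h rfl
  exact ⟨hw, by simpa using hx, rfl⟩

lemma posw_len_inj (a b : Fin d) {n m : ℕ} (h : posw a b n = posw a b m) : n = m := by
  have := congrArg List.length h
  simpa using this

lemma cnat_zero (a b : Fin d) : cnat a b 0 = a := by simp [cnat]

lemma cnat_one (a b : Fin d) : cnat a b 1 = b := by simp [cnat]
end BMProof

open BMProof

/-- If `F'` is 2-transitive (and preserves the `F`-orbits), then there is a geodesic
line `L` whose setwise stabilizer in `G(F, F')` contains a translation of length 2
along `L` and a rotation of `L` around `L 0`; consequently the setwise stabilizer acts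
transitively on the geometric edges of `L`. -/
theorem GFF_line_stabilizer_edge_transitive {V : Type*} (d : ℕ) (hd : 3 ≤ d)
    (F F' : Subgroup (Equiv.Perm (Fin d))) (hle : F ≤ F')
    (horb : ∀ π' ∈ F', ∀ i : Fin d, ∃ π ∈ F, π i = π' i)
    (h2t : ∀ i j k l : Fin d, i ≠ j → k ≠ l → ∃ π ∈ F', π i = k ∧ π j = l)
    (T : SimpleGraph V) (hT : T.IsTree) (C : LegalColoring T d) :
    ∃ L : ℤ → V, Function.Injective L ∧ (∀ i : ℤ, T.Adj (L i) (L (i + 1))) ∧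
      (∃ t ∈ GFFSet T C F F', (⇑t) '' Set.range L = Set.range L ∧
        ∀ i : ℤ, t (L i) = L (i + 2)) ∧
      (∃ r ∈ GFFSet T C F F', (⇑r) '' Set.range L = Set.range L ∧
        ∀ i : ℤ, r (L i) = L (-i)) ∧
      (∀ i j : ℤ, ∃ h ∈ GFFSet T C F F', (⇑h) '' Set.range L = Set.range L ∧
        ({h (L i), h (L (i + 1))} : Set V) = {L j, L (j + 1)}) := by
  classical
  obtain ⟨v0⟩ := hT.isConnected.nonempty
  haveI : Nontrivial (Fin d) := Fin.nontrivial_iff_two_le.mpr (by omega)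
  have ftrans : ∀ j k : Fin d, ∃ p, p ∈ F ∧ p j = k := by
    intro j k
    by_cases hjk : j = k
    · exact ⟨1, F.one_mem, by simp [hjk]⟩
    · obtain ⟨x, hx⟩ := exists_ne j
      obtain ⟨y, hy⟩ := exists_ne k
      obtain ⟨p', hp', hp'j, -⟩ := h2t j x k y (Ne.symm hx) (Ne.symm hy)
      obtain ⟨p, hpF, hpj⟩ := horb p' hp' j
      exact ⟨p, hpF, by rw [hpj, hp'j]⟩
  choose f hfF hf using ftrans
  set a : Fin d := ⟨0, by omega⟩ with ha
  set b : Fin d := ⟨1, by omega⟩ with hbdef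
  have hab : a ≠ b := by
    intro h
    have := congrArg Fin.val h
    simp [ha, hbdef] at this
  set π := f a b with hπdef
  have hπF : π ∈ F := hfF a b
  have hπa : π a = b := hf a b
  set c := π b with hc
  have hbc : b ≠ c := by
    intro h
    apply hab
    apply π.injective
    rw [hπa]
    exact h.trans hc
  obtain ⟨σ, hσF, hσa, hσb⟩ := h2t a b b a hab hab.symm
  obtain ⟨τ, hτF, hτc, hτb⟩ := h2t c b a b hbc.symm hab
  have hπc : ∀ n, π (cnat a b n) = cnat b c n := by
    intro n
    rcases Nat.even_or_odd n with h | h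
    · rw [cnat, cnat, if_pos h, if_pos h, hπa]
    · rw [cnat, cnat, if_neg (by simpa using Nat.not_even_iff_odd.mpr h),
        if_neg (by simpa using Nat.not_even_iff_odd.mpr h), hc]
  -- the reflection portrait
  set spρ : List (Fin d) → Option (Equiv.Perm (Fin d)) := fun w =>
    if w = [] then none
    else if w = posw a b w.length then some π
    else if w = posw b c w.length then some π⁻¹
    else none with hspρdef
  set Pρ := mkP f σ spρ with hPρdef
  have hspρ_pos : ∀ n, 1 ≤ n → spρ (posw a b n) = some π := by
    intro n hn
    simp only [hspρdef]
    rw [if_neg (posw_ne_nil a b hn), if_pos (by rw [posw_length])]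
  have hspρ_neg : ∀ n, 1 ≤ n → spρ (posw b c n) = some π⁻¹ := by
    intro n hn
    simp only [hspρdef]
    rw [if_neg (posw_ne_nil b c hn),
      if_neg (by rw [posw_length]; exact posw_ne_posw b c a b hab.symm hn hn),
      if_pos (by rw [posw_length])]
  have hPρ_nil : Pρ [] = σ := mkP_nil f σ spρ
  have hPρ_pos : ∀ n, 1 ≤ n → Pρ (posw a b n) = π := fun n hn =>
    mkP_eq_of_some (posw_ne_nil a b hn) (hspρ_pos n hn)
  have hPρ_neg : ∀ n, 1 ≤ n → Pρ (posw b c n) = π⁻¹ := fun n hn =>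
    mkP_eq_of_some (posw_ne_nil b c hn) (hspρ_neg n hn)
  have hcρ : Compat Pρ := by
    rw [hPρdef]
    refine mkP_compat hf ?_
    intro w x q h
    rw [← hPρdef]
    simp only [hspρdef] at h
    rw [if_neg (by simp)] at h
    by_cases h1 : w ++ [x] = posw a b (w ++ [x]).length
    · rw [if_pos h1] at h
      obtain rfl : π = q := Option.some_inj.mp h
      obtain ⟨hw, hx, -⟩ := concat_eq_posw h1
      rcases Nat.eq_zero_or_pos w.length with hw0 | hwpos
      · obtain rfl : w = [] := List.length_eq_zero_iff.mp hw0
        rw [hPρ_nil, hx]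
        show π (cnat a b 0) = σ (cnat a b 0)
        rw [cnat_zero, hπa, hσa]
      · rw [show w = posw a b w.length from hw, hPρ_pos w.length hwpos]
    · rw [if_neg h1] at h
      by_cases h2 : w ++ [x] = posw b c (w ++ [x]).length
      · rw [if_pos h2] at h
        obtain rfl : π⁻¹ = q := Option.some_inj.mp h
        obtain ⟨hw, hx, -⟩ := concat_eq_posw h2
        rcases Nat.eq_zero_or_pos w.length with hw0 | hwpos
        · obtain rfl : w = [] := List.length_eq_zero_iff.mp hw0
          rw [hPρ_nil, hx]
          show π⁻¹ (cnat b c 0) = σ (cnat b c 0)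
          rw [cnat_zero, hσb, ← hπa, Equiv.Perm.coe_inv, Equiv.symm_apply_apply]
        · rw [show w = posw b c w.length from hw, hPρ_neg w.length hwpos]
      · rw [if_neg h2] at h
        exact absurd h (by simp)
  have hval1 : ∀ m, Pρ (posw a b m) (cnat a b m) = cnat b c m := by
    intro m
    rcases Nat.eq_zero_or_pos m with rfl | hm
    · rw [posw_zero, hPρ_nil, cnat_zero, cnat_zero, hσa]
    · rw [hPρ_pos m hm, hπc]
  have hval2 : ∀ m, Pρ (posw b c m) (cnat b c m) = cnat a b m := by
    intro m
    rcases Nat.eq_zero_or_pos m with rfl | hm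
    · rw [posw_zero, hPρ_nil, cnat_zero, cnat_zero, hσb]
    · rw [hPρ_neg m hm, ← hπc, Equiv.Perm.coe_inv, Equiv.symm_apply_apply]
  have htrρ : ∀ n, tr Pρ (posw a b n) = posw b c n ∧ tr Pρ (posw b c n) = posw a b n := by
    intro n
    induction n with
    | zero => exact ⟨rfl, rfl⟩
    | succ m ih =>
      constructor
      · rw [posw_succ, tr_concat, ih.1, hval1, ← posw_succ]
      · rw [posw_succ, tr_concat, ih.2, hval2, ← posw_succ]
  -- the geodesic line
  set L : ℤ → V := fun k => if 0 ≤ k then walkTo C v0 (posw a b k.toNat)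
    else walkTo C v0 (posw b c (-k).toNat) with hLdef
  have hLpos : ∀ k : ℤ, 0 ≤ k → L k = walkTo C v0 (posw a b k.toNat) := by
    intro k hk
    simp only [hLdef]
    rw [if_pos hk]
  have hLneg : ∀ k : ℤ, k ≤ 0 → L k = walkTo C v0 (posw b c (-k).toNat) := by
    intro k hk
    rcases lt_or_eq_of_le hk with hk' | rfl
    · simp only [hLdef]
      rw [if_neg (by omega)]
    · simp only [hLdef]
      rw [if_pos le_rfl]
      norm_num
  have haddr_pos : ∀ k : ℤ, 0 ≤ k → addr C hT v0 (L k) = posw a b k.toNat := by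
    intro k hk
    rw [hLpos k hk, addr_walkTo C hT v0 (posw_chain a b hab _)]
  have haddr_neg : ∀ k : ℤ, k ≤ 0 → addr C hT v0 (L k) = posw b c (-k).toNat := by
    intro k hk
    rw [hLneg k hk, addr_walkTo C hT v0 (posw_chain b c hbc _)]
  -- injectivity of L
  have hLinj : Function.Injective L := by
    intro k k' hkk
    have h2 := congrArg (addr C hT v0) hkk
    rcases le_or_gt 0 k with hk | hk <;> rcases le_or_gt 0 k' with hk' | hk'
    · rw [haddr_pos k hk, haddr_pos k' hk'] at h2
      have := posw_len_inj a b h2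
      omega
    · rw [haddr_pos k hk, haddr_neg k' (by omega)] at h2
      have hlen := congrArg List.length h2
      simp only [posw_length] at hlen
      exact absurd h2 (posw_ne_posw a b b c hab (by omega) (by omega))
    · rw [haddr_neg k (by omega), haddr_pos k' hk'] at h2
      have hlen := congrArg List.length h2
      simp only [posw_length] at hlen
      exact absurd h2 (posw_ne_posw b c a b hab.symm (by omega) (by omega))
    · rw [haddr_neg k (by omega), haddr_neg k' (by omega)] at h2
      have := posw_len_inj b c h2
      omega
  -- adjacency along L
  have hadjL : ∀ i : ℤ, T.Adj (L i) (L (i + 1)) := by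
    intro k
    rcases le_or_gt 0 k with hk | hk
    · rw [hLpos k hk, hLpos (k + 1) (by omega), show (k + 1).toNat = k.toNat + 1 by omega,
        posw_succ, walkTo_append]
      simp only [walkTo_cons, walkTo_nil]
      exact adj_nb C _ _
    · rw [hLneg k (by omega), hLneg (k + 1) (by omega),
        show (-k).toNat = (-(k + 1)).toNat + 1 by omega, posw_succ, walkTo_append]
      simp only [walkTo_cons, walkTo_nil]
      exact (adj_nb C _ _).symm
  -- the reflection
  set rE := pperm C hT v0 v0 hcρ with hrEdef
  have hrEL : ∀ k : ℤ, rE (L k) = L (-k) := by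
    intro k
    rcases le_or_gt 0 k with hk | hk
    · rw [hrEdef, pperm_apply C hT v0 v0 hcρ, haddr_pos k hk, (htrρ k.toNat).1,
        hLneg (-k) (by omega)]
      norm_num
    · rw [hrEdef, pperm_apply C hT v0 v0 hcρ, haddr_neg k (by omega), (htrρ (-k).toNat).2,
        hLpos (-k) (by omega)]
  have hrEmem : rE ∈ GFFSet T C F F' := by
    refine ⟨⟨pperm_mem_aut C hT v0 v0 hcρ, ?_⟩, pperm_mem_aut C hT v0 v0 hcρ, fun v => ?_⟩
    · refine Set.Finite.subset
        (Set.Finite.preimage ((addr_injective C hT v0).injOn)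
          (Set.finite_singleton ([] : List (Fin d)))) ?_
      intro v hv
      simp only [Set.mem_setOf_eq] at hv
      simp only [Set.mem_preimage, Set.mem_singleton_iff]
      by_contra hne
      apply hv
      apply pperm_localIn
      rw [hPρdef]
      refine mkP_memF hne ?_ hfF
      intro q hq
      simp only [hspρdef] at hq
      rw [if_neg hne] at hq
      by_cases h1 : addr C hT v0 v = posw a b (addr C hT v0 v).length
      · rw [if_pos h1] at hq
        rw [← Option.some_inj.mp hq]
        exact hπF
      · rw [if_neg h1] at hq
        by_cases h2 : addr C hT v0 v = posw b c (addr C hT v0 v).length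
        · rw [if_pos h2] at hq
          rw [← Option.some_inj.mp hq]
          exact F.inv_mem hπF
        · rw [if_neg h2] at hq
          exact absurd hq (by simp)
    · apply pperm_localIn
      rw [hPρdef]
      refine mkP_mem hσF ?_ (fun j k => hle (hfF j k)) _
      intro w q hq
      simp only [hspρdef] at hq
      by_cases h0 : w = []
      · rw [if_pos h0] at hq
        exact absurd hq (by simp)
      · rw [if_neg h0] at hq
        by_cases h1 : w = posw a b w.length
        · rw [if_pos h1] at hq
          rw [← Option.some_inj.mp hq]
          exact hle hπF
        · rw [if_neg h1] at hq
          by_cases h2 : w = posw b c w.length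
          · rw [if_pos h2] at hq
            rw [← Option.some_inj.mp hq]
            exact hle (F.inv_mem hπF)
          · rw [if_neg h2] at hq
            exact absurd hq (by simp)
  -- the translation portrait
  set spt : List (Fin d) → Option (Equiv.Perm (Fin d)) := fun w =>
    if w = posw b c 1 ∨ w = posw b c 2 then some τ
    else if w = [] then none
    else if w = posw a b w.length then some (1 : Equiv.Perm (Fin d))
    else if w = posw b c w.length then some (1 : Equiv.Perm (Fin d))
    else none with hsptdef
  set Pt := mkP f 1 spt with hPtdef
  have hPt_nil : Pt [] = 1 := mkP_nil f 1 spt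
  have hspt_ab : ∀ n, 1 ≤ n → spt (posw a b n) = some 1 := by
    intro n hn
    simp only [hsptdef]
    rw [if_neg (by
        rintro (h | h)
        · exact posw_ne_posw a b b c hab hn (by norm_num) h
        · exact posw_ne_posw a b b c hab hn (by norm_num) h),
      if_neg (posw_ne_nil a b hn), if_pos (by rw [posw_length])]
  have hPt_ab : ∀ n, Pt (posw a b n) = 1 := by
    intro n
    rcases Nat.eq_zero_or_pos n with rfl | hn
    · exact hPt_nil
    · exact mkP_eq_of_some (posw_ne_nil a b hn) (hspt_ab n hn)
  have hspt_neg1 : spt (posw b c 1) = some τ := by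
    simp [hsptdef]
  have hspt_neg2 : spt (posw b c 2) = some τ := by
    simp [hsptdef]
  have hPt_neg1 : Pt (posw b c 1) = τ :=
    mkP_eq_of_some (posw_ne_nil b c (by norm_num)) hspt_neg1
  have hPt_neg2 : Pt (posw b c 2) = τ :=
    mkP_eq_of_some (posw_ne_nil b c (by norm_num)) hspt_neg2
  have hspt_negbig : ∀ n, 3 ≤ n → spt (posw b c n) = some 1 := by
    intro n hn
    simp only [hsptdef]
    rw [if_neg (by
        rintro (h | h)
        · have := posw_len_inj b c h; omega
        · have := posw_len_inj b c h; omega),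
      if_neg (posw_ne_nil b c (by omega)),
      if_neg (by rw [posw_length]; exact posw_ne_posw b c a b hab.symm (by omega) (by omega)),
      if_pos (by rw [posw_length])]
  have hPt_negbig : ∀ n, 3 ≤ n → Pt (posw b c n) = 1 := fun n hn =>
    mkP_eq_of_some (posw_ne_nil b c (by omega)) (hspt_negbig n hn)
  have hct : Compat Pt := by
    rw [hPtdef]
    refine mkP_compat hf ?_
    intro w x q h
    rw [← hPtdef]
    simp only [hsptdef] at h
    by_cases h1 : w ++ [x] = posw b c 1 ∨ w ++ [x] = posw b c 2
    · rw [if_pos h1] at h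
      obtain rfl : τ = q := Option.some_inj.mp h
      rcases h1 with h1 | h1
      · obtain ⟨hw, hx, hn⟩ := concat_eq_posw h1
        obtain rfl : w = [] := List.length_eq_zero_iff.mp (by omega)
        rw [hPt_nil, hx]
        show τ (cnat b c 0) = (1 : Equiv.Perm (Fin d)) (cnat b c 0)
        rw [cnat_zero]
        simp [hτb]
      · obtain ⟨hw, hx, hn⟩ := concat_eq_posw h1
        have hw1 : w.length = 1 := by omega
        rw [show w = posw b c w.length from hw, hw1, hPt_neg1]
    · rw [if_neg h1, if_neg (by simp)] at h
      by_cases h2 : w ++ [x] = posw a b (w ++ [x]).length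
      · rw [if_pos h2] at h
        obtain rfl : (1 : Equiv.Perm (Fin d)) = q := Option.some_inj.mp h
        obtain ⟨hw, hx, -⟩ := concat_eq_posw h2
        rcases Nat.eq_zero_or_pos w.length with hw0 | hwpos
        · obtain rfl : w = [] := List.length_eq_zero_iff.mp hw0
          rw [hPt_nil]
        · rw [show w = posw a b w.length from hw, hPt_ab]
      · rw [if_neg h2] at h
        by_cases h3 : w ++ [x] = posw b c (w ++ [x]).length
        · rw [if_pos h3] at h
          obtain rfl : (1 : Equiv.Perm (Fin d)) = q := Option.some_inj.mp h
          obtain ⟨hw, hx, -⟩ := concat_eq_posw h3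
          rcases Nat.eq_zero_or_pos w.length with hw0 | hwpos
          · obtain rfl : w = [] := List.length_eq_zero_iff.mp hw0
            rw [hPt_nil]
          · rcases eq_or_ne w.length 1 with hw1 | hne1
            · exfalso
              apply h1
              right
              calc w ++ [x] = posw b c (w ++ [x]).length := h3
                _ = posw b c 2 := by
                    rw [show (w ++ [x]).length = 2 by simp [hw1]]
            · rcases eq_or_ne w.length 2 with hw2 | hne2
              · rw [show w = posw b c w.length from hw, hw2, hPt_neg2, hx, hw2]
                show (1 : Equiv.Perm (Fin d)) (cnat b c 2) = τ (cnat b c 2)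
                rw [show cnat b c 2 = b from by rw [cnat_period, cnat_zero]]
                simp [hτb]
              · rw [show w = posw b c w.length from hw, hPt_negbig w.length (by omega)]
        · rw [if_neg h3] at h
          exact absurd h (by simp)
  -- transforms of line words under the translation portrait
  have hvalt1 : ∀ m, Pt (posw a b m) (cnat a b m) = cnat a b m := by
    intro m
    rw [hPt_ab]
    simp
  have htrt_ab : ∀ n, tr Pt (posw a b n) = posw a b n := by
    intro n
    induction n with
    | zero => rfl
    | succ m ih => rw [posw_succ, tr_concat, ih, hvalt1, ← posw_succ]
  have htrt_n1 : tr Pt (posw b c 1) = [cnat a b 1] := by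
    rw [show (1 : ℕ) = 0 + 1 from rfl, posw_succ, tr_concat]
    show ([] : List (Fin d)) ++ [Pt (posw b c 0) (cnat b c 0)] = [cnat a b 1]
    rw [posw_zero, hPt_nil, cnat_zero, cnat_one]
    simp
  have htrt_n2up : ∀ m, tr Pt (posw b c (m + 2)) = [cnat a b 1, cnat a b 0] ++ posw b c m := by
    intro m
    induction m with
    | zero =>
      rw [show (0 : ℕ) + 2 = 1 + 1 from rfl, posw_succ, tr_concat, htrt_n1, hPt_neg1]
      rw [show cnat b c 1 = c from cnat_one b c, hτc]
      simp [cnat_zero]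
    | succ m ih =>
      rw [show m + 1 + 2 = (m + 2) + 1 by omega, posw_succ, tr_concat, ih]
      rcases Nat.eq_zero_or_pos m with rfl | hm
      · rw [hPt_neg2, show cnat b c (0 + 2) = b from by rw [cnat_period, cnat_zero], hτb]
        rw [show (0 : ℕ) + 1 = 1 from rfl, posw_one]
        simp
      · rw [hPt_negbig (m + 2) (by omega),
          show (1 : Equiv.Perm (Fin d)) (cnat b c (m + 2)) = cnat b c m from by
            rw [cnat_period]; simp,
          posw_succ]
        simp
  -- the translation
  set u0 := walkTo C v0 (posw a b 2) with hu0
  have hnbu0 : nb C u0 b = nb C v0 a := by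
    rw [hu0, posw_two]
    show nb C (walkTo C v0 (a :: b :: [])) b = nb C v0 a
    simp only [walkTo_cons, walkTo_nil]
    exact nb_nb C (nb C v0 a) b
  have hnb2 : nb C (nb C v0 a) a = v0 := nb_nb C v0 a
  set tE := pperm C hT v0 u0 hct with htEdef
  have htEL : ∀ k : ℤ, tE (L k) = L (k + 2) := by
    intro k
    rcases le_or_gt 0 k with hk | hk
    · rw [htEdef, pperm_apply C hT v0 u0 hct, haddr_pos k hk, htrt_ab,
        hLpos (k + 2) (by omega), show (k + 2).toNat = k.toNat + 2 by omega, posw_add_two,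
        walkTo_append, ← hu0]
    · rcases eq_or_ne k (-1) with rfl | hkne
      · rw [htEdef, pperm_apply C hT v0 u0 hct, haddr_neg (-1) (by omega),
          show ((-(-1 : ℤ)).toNat) = 1 by omega, htrt_n1, cnat_one]
        show walkTo C u0 (b :: []) = L (-1 + 2)
        simp only [walkTo_cons, walkTo_nil]
        rw [hnbu0, show (-1 : ℤ) + 2 = 1 by omega, hLpos 1 (by omega),
          show ((1 : ℤ)).toNat = 1 by omega, posw_one]
        show nb C v0 a = walkTo C v0 (a :: [])
        simp only [walkTo_cons, walkTo_nil]
      · have hk2 : k ≤ -2 := by omega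
        rw [htEdef, pperm_apply C hT v0 u0 hct, haddr_neg k (by omega),
          show ((-k).toNat) = ((-k).toNat - 2) + 2 by omega, htrt_n2up, walkTo_append]
        have hstep : walkTo C u0 [cnat a b 1, cnat a b 0] = v0 := by
          simp only [walkTo_cons, walkTo_nil, cnat_one, cnat_zero]
          rw [hnbu0, hnb2]
        rw [hstep, hLneg (k + 2) (by omega), show ((-(k + 2)).toNat) = (-k).toNat - 2 by omega]
  have htEmem : tE ∈ GFFSet T C F F' := by
    refine ⟨⟨pperm_mem_aut C hT v0 u0 hct, ?_⟩, pperm_mem_aut C hT v0 u0 hct, fun v => ?_⟩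
    · refine Set.Finite.subset
        (Set.Finite.preimage ((addr_injective C hT v0).injOn)
          ((Set.finite_singleton (posw b c 2)).insert (posw b c 1) |>.insert ([]))) ?_
      intro v hv
      simp only [Set.mem_setOf_eq] at hv
      simp only [Set.mem_preimage, Set.mem_insert_iff, Set.mem_singleton_iff]
      by_contra hne
      push_neg at hne
      obtain ⟨hne0, hne1, hne2⟩ := hne
      apply hv
      apply pperm_localIn
      rw [hPtdef]
      refine mkP_memF hne0 ?_ hfF
      intro q hq
      simp only [hsptdef] at hq
      rw [if_neg (by tauto), if_neg hne0] at hq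
      by_cases h1 : addr C hT v0 v = posw a b (addr C hT v0 v).length
      · rw [if_pos h1] at hq
        rw [← Option.some_inj.mp hq]
        exact F.one_mem
      · rw [if_neg h1] at hq
        by_cases h2 : addr C hT v0 v = posw b c (addr C hT v0 v).length
        · rw [if_pos h2] at hq
          rw [← Option.some_inj.mp hq]
          exact F.one_mem
        · rw [if_neg h2] at hq
          exact absurd hq (by simp)
    · apply pperm_localIn
      rw [hPtdef]
      refine mkP_mem F'.one_mem ?_ (fun j k => hle (hfF j k)) _
      intro w q hq
      simp only [hsptdef] at hq
      by_cases h1 : w = posw b c 1 ∨ w = posw b c 2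
      · rw [if_pos h1] at hq
        rw [← Option.some_inj.mp hq]
        exact hτF
      · rw [if_neg h1] at hq
        by_cases h0 : w = []
        · rw [if_pos h0] at hq
          exact absurd hq (by simp)
        · rw [if_neg h0] at hq
          by_cases h2 : w = posw a b w.length
          · rw [if_pos h2] at hq
            rw [← Option.some_inj.mp hq]
            exact F'.one_mem
          · rw [if_neg h2] at hq
            by_cases h3 : w = posw b c w.length
            · rw [if_pos h3] at hq
              rw [← Option.some_inj.mp hq]
              exact F'.one_mem
            · rw [if_neg h3] at hq
              exact absurd hq (by simp)
  -- identity is in GFFSet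
  have hone : (1 : Equiv.Perm V) ∈ GFFSet T C F F' := by
    have hloc : ∀ (F'' : Subgroup (Equiv.Perm (Fin d))) (v : V),
        LocalIn T C F'' (1 : Equiv.Perm V) v :=
      fun F'' v => ⟨1, F''.one_mem, fun w _ => by simp⟩
    refine ⟨⟨T.autSubgroup.one_mem, ?_⟩, T.autSubgroup.one_mem, fun v => hloc F' v⟩
    refine Set.Finite.subset Set.finite_empty ?_
    intro v hv
    exact absurd (hloc F v) hv
  -- image helper
  have himg : ∀ (h : Equiv.Perm V) (φ : ℤ → ℤ), (∀ i, h (L i) = L (φ i)) →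
      (∀ j : ℤ, ∃ i, φ i = j) → (⇑h) '' Set.range L = Set.range L := by
    intro h φ hφ hsurj
    ext x
    constructor
    · rintro ⟨y, ⟨i, rfl⟩, rfl⟩
      exact ⟨φ i, (hφ i).symm⟩
    · rintro ⟨j, rfl⟩
      obtain ⟨i, rfl⟩ := hsurj j
      exact ⟨L i, ⟨i, rfl⟩, hφ i⟩
  -- powers of the translation
  have hpowN : ∀ n : ℕ, ∃ h ∈ GFFSet T C F F', ∀ i : ℤ, h (L i) = L (i + 2 * n) := by
    intro n
    induction n with
    | zero => exact ⟨1, hone, fun i => by simp⟩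
    | succ m ih =>
      obtain ⟨h, hh, hhL⟩ := ih
      refine ⟨tE * h, GFF_mul C htEmem hh, fun i => ?_⟩
      rw [Equiv.Perm.mul_apply, hhL i, htEL (i + 2 * m)]
      congr 1
      push_cast
      ring
  have hpowZ : ∀ n : ℤ, ∃ h ∈ GFFSet T C F F', ∀ i : ℤ, h (L i) = L (i + 2 * n) := by
    intro n
    rcases le_or_gt 0 n with hn | hn
    · obtain ⟨h, hh, hhL⟩ := hpowN n.toNat
      exact ⟨h, hh, fun i => by rw [hhL i]; congr 1; omega⟩
    · obtain ⟨h, hh, hhL⟩ := hpowN (-n).toNat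
      refine ⟨h⁻¹, GFF_inv C hh, fun i => ?_⟩
      have h1 := hhL (i + 2 * n)
      rw [show i + 2 * n + 2 * ((-n).toNat : ℤ) = i by omega] at h1
      rw [← h1]
      simp
  -- assembly
  refine ⟨L, hLinj, hadjL, ⟨tE, htEmem, himg tE (· + 2) htEL (fun j => ⟨j - 2, by ring⟩), htEL⟩,
    ⟨rE, hrEmem, himg rE (fun i => -i) hrEL (fun j => ⟨-j, by ring⟩), hrEL⟩, ?_⟩
  intro i j
  rcases Int.even_or_odd (j - i) with ⟨k, hk⟩ | ⟨k, hk⟩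
  · obtain ⟨h, hh, hhL⟩ := hpowZ k
    refine ⟨h, hh, himg h (· + 2 * k) hhL (fun m => ⟨m - 2 * k, by ring⟩), ?_⟩
    rw [hhL i, hhL (i + 1), show i + 2 * k = j by omega, show i + 1 + 2 * k = j + 1 by omega]
  · obtain ⟨h, hh, hhL⟩ := hpowZ (i + k + 1)
    refine ⟨h * rE, GFF_mul C hh hrEmem, ?_, ?_⟩
    · refine himg _ (fun x => -x + 2 * (i + k + 1)) ?_ ?_
      · intro x
        rw [Equiv.Perm.mul_apply, hrEL x, hhL (-x)]
      · intro m
        exact ⟨-(m - 2 * (i + k + 1)), by ring⟩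
    · have hva : (h * rE) (L i) = L (j + 1) := by
        rw [Equiv.Perm.mul_apply, hrEL i, hhL (-i)]
        congr 1
        omega
      have hvb : (h * rE) (L (i + 1)) = L j := by
        rw [Equiv.Perm.mul_apply, hrEL (i + 1), hhL (-(i + 1))]
        congr 1
        omega
      rw [hva, hvb, Set.pair_comm]
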